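/- Let 1 < p < 2 < r with p = r/(r−1). Suppose g : Ω → ℝ satisfies g ∈ 𝕃^p(μ) and g − g∘T ∈ 𝕃^r(μ). Then (n log log n)^{-1/2} · g ∘ T^n → 0 μ-almost surely as n → ∞. -/

import Mathlib

open MeasureTheory Filter Topology
open scoped ENNReal NNReal

noncomputable section

namespace Stmt2Aux

/-- scale threshold -/
def lam (s : ℕ) : ℝ := Real.sqrt (2^s * Real.log s)

/-- window length -/
def Lwin (p : ℝ) (s : ℕ) : ℕ := ⌈((2:ℝ)^s) ^ (1 - p/2)⌉₊

def tcut (ε : ℝ) (s : ℕ) : ℝ := ε/4 * lam s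

def Kcut (p ε : ℝ) (s : ℕ) : ℝ := tcut ε s / (2 * (Lwin p s : ℝ))

variable {Ω : Type*} [MeasurableSpace Ω]

def Gset (ε : ℝ) (g : Ω → ℝ) (s : ℕ) : Set Ω := {x | ε/2 * lam s < |g x|}

def phi (p ε : ℝ) (h : Ω → ℝ) (s : ℕ) (x : Ω) : ℝ :=
  if Kcut p ε s < |h x| then |h x| else 0

def cnt (ε : ℝ) (g : Ω → ℝ) (T : Ω → Ω) (s : ℕ) (ω : Ω) : ℝ≥0∞ :=
  ∑ m ∈ Finset.Ico (2^s) (2^(s+2)), (Gset ε g s).indicator 1 (T^[m] ω)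

def Cset (p ε : ℝ) (g : Ω → ℝ) (T : Ω → Ω) (s : ℕ) : Set Ω :=
  {ω | (Lwin p s : ℝ≥0∞) ≤ cnt ε g T s ω}

def Eset (p ε : ℝ) (h : Ω → ℝ) (T : Ω → Ω) (s i : ℕ) : Set Ω :=
  {ω | ENNReal.ofReal (tcut ε s / 2) ≤
    ∑ j ∈ Finset.range (Lwin p s), ENNReal.ofReal (phi p ε h s (T^[2^s + i * Lwin p s + j] ω))}

def Nwin (p : ℝ) (s : ℕ) : ℕ := 2^s / Lwin p s + 1

def Bbad (p ε : ℝ) (g h : Ω → ℝ) (T : Ω → Ω) (s : ℕ) : Set Ω :=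
  Cset p ε g T s ∪ ⋃ i ∈ Finset.range (Nwin p s), Eset p ε h T s i

/- ### basic real estimates -/

lemma log_nat_ge_one {s : ℕ} (hs : 3 ≤ s) : 1 ≤ Real.log s := by
  have h3 : Real.exp 1 < 3 := lt_trans Real.exp_one_lt_d9 (by norm_num)
  have hs3 : (3:ℝ) ≤ (s:ℝ) := by exact_mod_cast hs
  calc (1:ℝ) = Real.log (Real.exp 1) := (Real.log_exp 1).symm
    _ ≤ Real.log s := Real.log_le_log (Real.exp_pos 1) (by linarith)

lemma sqrt_two_pow (s : ℕ) : Real.sqrt 2 ^ s = Real.sqrt ((2:ℝ)^s) := by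
  rw [show ((2:ℝ)^s) = ((Real.sqrt 2)^s)^2 by
    rw [← pow_mul, mul_comm s 2, pow_mul, Real.sq_sqrt (by norm_num : (0:ℝ) ≤ 2)]]
  rw [Real.sqrt_sq (pow_nonneg (Real.sqrt_nonneg 2) s)]

lemma one_lt_sqrt_two : (1:ℝ) < Real.sqrt 2 := by
  rw [show (1:ℝ) = Real.sqrt 1 from (Real.sqrt_one).symm]
  exact Real.sqrt_lt_sqrt (by norm_num) (by norm_num)

lemma lam_lb {s : ℕ} (hs : 3 ≤ s) : Real.sqrt 2 ^ s ≤ lam s := by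
  rw [sqrt_two_pow, lam]
  apply Real.sqrt_le_sqrt
  nlinarith [log_nat_ge_one hs, pow_pos (by norm_num : (0:ℝ) < 2) s]

lemma lam_nonneg (s : ℕ) : 0 ≤ lam s := Real.sqrt_nonneg _

lemma lam_pos {s : ℕ} (hs : 3 ≤ s) : 0 < lam s :=
  lt_of_lt_of_le (pow_pos (lt_trans one_pos one_lt_sqrt_two) s) (lam_lb hs)

section pbounds

variable {p : ℝ} (hp1 : 1 < p) (hp2 : p < 2)

include hp1 hp2

lemma xs_one_le (s : ℕ) : 1 ≤ ((2:ℝ)^s) ^ (1 - p/2) :=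
  Real.one_le_rpow (one_le_pow₀ (by norm_num)) (by linarith)

lemma Lwin_lb (s : ℕ) : ((2:ℝ)^s) ^ (1 - p/2) ≤ (Lwin p s : ℝ) := Nat.le_ceil _

lemma Lwin_ub (s : ℕ) : (Lwin p s : ℝ) ≤ 2 * ((2:ℝ)^s) ^ (1 - p/2) := by
  have h1 := xs_one_le hp1 hp2 s
  have h2 := Nat.ceil_lt_add_one (le_trans zero_le_one h1)
  have : (Lwin p s : ℝ) < ((2:ℝ)^s) ^ (1 - p/2) + 1 := h2
  linarith

lemma Lwin_pos (s : ℕ) : 0 < Lwin p s :=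
  Nat.ceil_pos.mpr (lt_of_lt_of_le one_pos (xs_one_le hp1 hp2 s))

lemma Lwin_le (s : ℕ) : Lwin p s ≤ 2^s := by
  apply Nat.ceil_le.mpr
  push_cast
  calc ((2:ℝ)^s) ^ (1 - p/2) ≤ ((2:ℝ)^s) ^ (1:ℝ) :=
        Real.rpow_le_rpow_of_exponent_le (one_le_pow₀ (by norm_num)) (by linarith)
    _ = (2:ℝ)^s := Real.rpow_one _

end pbounds

/- ### the deterministic step -/

lemma det {p ε : ℝ} (hp1 : 1 < p) (hp2 : p < 2) (hε : 0 < ε)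
    (T : Ω ≃ᵐ Ω) (g h : Ω → ℝ) (hgh : ∀ x, h x = g x - g (T x)) {s : ℕ} (hs : 3 ≤ s)
    (ω : Ω) (hB : ω ∉ Bbad p ε g h T s) :
    ∀ n : ℕ, 2^s ≤ n → n < 2^(s+1) → |g ((⇑T)^[n] ω)| ≤ ε * lam s := by
  intro n hn1 hn2
  by_contra hcon
  push_neg at hcon
  have hL1 : 0 < Lwin p s := Lwin_pos hp1 hp2 s
  have hLle : Lwin p s ≤ 2^s := Lwin_le hp1 hp2 s
  have hps : 2^(s+1) = 2 * 2^s := by ring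
  have hps2 : 2^(s+2) = 4 * 2^s := by ring
  have hIL : ((n - 2^s) / Lwin p s) * Lwin p s ≤ n - 2^s := Nat.div_mul_le_self _ _
  have hmod : (n - 2^s) % Lwin p s < Lwin p s := Nat.mod_lt _ hL1
  have hdm : Lwin p s * ((n - 2^s) / Lwin p s) + (n - 2^s) % Lwin p s = n - 2^s :=
    Nat.div_add_mod _ _
  have hbn : 2^s + ((n - 2^s) / Lwin p s) * Lwin p s ≤ n := by omega
  have hnb : n < 2^s + ((n - 2^s) / Lwin p s) * Lwin p s + Lwin p s := by
    have : Lwin p s * ((n - 2^s) / Lwin p s) = ((n - 2^s) / Lwin p s) * Lwin p s :=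
      Nat.mul_comm _ _
    omega
  have hiN : (n - 2^s) / Lwin p s < Nwin p s := by
    have h2 : (n - 2^s) / Lwin p s ≤ 2^s / Lwin p s := Nat.div_le_div_right (by omega)
    rw [Nwin]; omega
  have hwend : 2^s + ((n - 2^s) / Lwin p s) * Lwin p s + Lwin p s ≤ 2^(s+2) := by omega
  set i := (n - 2^s) / Lwin p s with hidef
  set b := 2^s + i * Lwin p s with hbdef
  have hC : ω ∉ Cset p ε g T s := fun hmem => hB (Or.inl hmem)
  have hE : ω ∉ Eset p ε h T s i := by
    intro hmem
    exact hB (Or.inr (Set.mem_biUnion (Finset.mem_range.mpr hiN) hmem))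
  -- window sum of phi is small
  have hphi_nonneg : ∀ x, 0 ≤ phi p ε h s x := by
    intro x; rw [phi]; split_ifs with hx
    · exact abs_nonneg _
    · exact le_rfl
  have htpos : 0 ≤ tcut ε s := by
    rw [tcut]
    exact mul_nonneg (by positivity) (lam_nonneg s)
  have hsum_phi : ∑ j ∈ Finset.range (Lwin p s), phi p ε h s (T^[b + j] ω) < tcut ε s / 2 := by
    by_contra hc2
    push_neg at hc2
    apply hE
    show ENNReal.ofReal (tcut ε s / 2) ≤ _
    calc ENNReal.ofReal (tcut ε s / 2)
        ≤ ENNReal.ofReal (∑ j ∈ Finset.range (Lwin p s), phi p ε h s (T^[b + j] ω)) :=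
          ENNReal.ofReal_le_ofReal hc2
      _ = ∑ j ∈ Finset.range (Lwin p s), ENNReal.ofReal (phi p ε h s (T^[b + j] ω)) :=
          ENNReal.ofReal_sum_of_nonneg (fun j _ => hphi_nonneg _)
  have hKL : (Lwin p s : ℝ) * Kcut p ε s = tcut ε s / 2 := by
    rw [Kcut]
    have hL0 : (Lwin p s : ℝ) ≠ 0 := by positivity
    field_simp
  have hK0 : 0 ≤ Kcut p ε s := by
    rw [Kcut]
    apply div_nonneg htpos
    positivity
  have hsum_h : ∑ j ∈ Finset.Ico b (b + Lwin p s), |h (T^[j] ω)| ≤ tcut ε s := by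
    rw [Finset.sum_Ico_eq_sum_range]
    simp only [Nat.add_sub_cancel_left]
    calc ∑ j ∈ Finset.range (Lwin p s), |h (T^[b + j] ω)|
        ≤ ∑ j ∈ Finset.range (Lwin p s), (Kcut p ε s + phi p ε h s (T^[b + j] ω)) := by
          apply Finset.sum_le_sum
          intro j _
          rw [phi]
          split_ifs with hx
          · linarith [hK0]
          · push_neg at hx; linarith
      _ = (Lwin p s : ℝ) * Kcut p ε s
            + ∑ j ∈ Finset.range (Lwin p s), phi p ε h s (T^[b + j] ω) := by
          rw [Finset.sum_add_distrib, Finset.sum_const, Finset.card_range, nsmul_eq_mul]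
      _ ≤ tcut ε s / 2 + tcut ε s / 2 := by
          rw [hKL]; linarith [hsum_phi]
      _ = tcut ε s := by ring
  have htel : ∀ a c : ℕ, a ≤ c →
      g (T^[a] ω) - g (T^[c] ω) = ∑ j ∈ Finset.Ico a c, h (T^[j] ω) := by
    intro a c hac
    have hstep : ∀ j : ℕ, h (T^[j] ω) = g (T^[j] ω) - g (T^[j+1] ω) := by
      intro j
      rw [hgh, Function.iterate_succ_apply']
    calc g (T^[a] ω) - g (T^[c] ω)
        = (g (T^[0] ω) - g (T^[c] ω)) - (g (T^[0] ω) - g (T^[a] ω)) := by ring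
      _ = (∑ j ∈ Finset.range c, (g (T^[j] ω) - g (T^[j+1] ω)))
            - (∑ j ∈ Finset.range a, (g (T^[j] ω) - g (T^[j+1] ω))) := by
          rw [Finset.sum_range_sub' (fun j => g (T^[j] ω)), Finset.sum_range_sub' (fun j => g (T^[j] ω))]
      _ = ∑ j ∈ Finset.Ico a c, (g (T^[j] ω) - g (T^[j+1] ω)) := (Finset.sum_Ico_eq_sub _ hac).symm
      _ = ∑ j ∈ Finset.Ico a c, h (T^[j] ω) := by
          exact Finset.sum_congr rfl (fun j _ => (hstep j).symm)
  have hosc : ∀ m : ℕ, b ≤ m → m < b + Lwin p s →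
      |g (T^[m] ω) - g (T^[n] ω)| ≤ tcut ε s := by
    intro m hm1 hm2
    have habs : ∀ a c : ℕ, b ≤ a → c ≤ b + Lwin p s → a ≤ c →
        |g (T^[a] ω) - g (T^[c] ω)| ≤ tcut ε s := by
      intro a c ha hc hac
      rw [htel a c hac]
      calc |∑ j ∈ Finset.Ico a c, h (T^[j] ω)| ≤ ∑ j ∈ Finset.Ico a c, |h (T^[j] ω)| :=
            Finset.abs_sum_le_sum_abs _ _
        _ ≤ ∑ j ∈ Finset.Ico b (b + Lwin p s), |h (T^[j] ω)| := by
            apply Finset.sum_le_sum_of_subset_of_nonneg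
            · exact Finset.Ico_subset_Ico ha hc
            · intro j _ _; exact abs_nonneg _
        _ ≤ tcut ε s := hsum_h
    rcases le_total m n with hmn | hnm
    · exact habs m n hm1 (le_of_lt hnb) hmn
    · rw [abs_sub_comm]
      exact habs n m hbn (le_of_lt hm2) hnm
  have hτm : ∀ m : ℕ, b ≤ m → m < b + Lwin p s → (T^[m] ω) ∈ Gset ε g s := by
    intro m hm1 hm2
    have h1 := hosc m hm1 hm2
    have h2 : |g (T^[n] ω)| - |g (T^[m] ω)| ≤ |g (T^[m] ω) - g (T^[n] ω)| := by
      rw [abs_sub_comm]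
      exact abs_sub_abs_le_abs_sub _ _
    have hlam0 : 0 ≤ lam s := lam_nonneg s
    have hεlam : 0 ≤ ε * lam s := mul_nonneg hε.le hlam0
    show ε/2 * lam s < |g (T^[m] ω)|
    rw [tcut] at h1
    nlinarith [hcon]
  apply hC
  show (Lwin p s : ℝ≥0∞) ≤ cnt ε g T s ω
  have hsubw : Finset.Ico b (b + Lwin p s) ⊆ Finset.Ico (2^s) (2^(s+2)) := by
    apply Finset.Ico_subset_Ico <;> omega
  calc (Lwin p s : ℝ≥0∞) = ∑ _m ∈ Finset.Ico b (b + Lwin p s), (1:ℝ≥0∞) := by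
        rw [Finset.sum_const, Nat.card_Ico, Nat.add_sub_cancel_left, nsmul_eq_mul, mul_one]
    _ = ∑ m ∈ Finset.Ico b (b + Lwin p s), (Gset ε g s).indicator 1 (T^[m] ω) := by
        apply Finset.sum_congr rfl
        intro m hm
        rw [Finset.mem_Ico] at hm
        rw [Set.indicator_of_mem (hτm m hm.1 hm.2)]
        rfl
    _ ≤ cnt ε g T s ω := Finset.sum_le_sum_of_subset hsubw


/- ### rpow bookkeeping -/

lemma pow_base_swap (s : ℕ) (y : ℝ) : ((2:ℝ)^(y:ℝ))^s = ((2:ℝ)^s)^(y:ℝ) := by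
  rw [← Real.rpow_natCast ((2:ℝ)^(y:ℝ)) s, ← Real.rpow_mul (by norm_num : (0:ℝ) ≤ 2),
    mul_comm, Real.rpow_natCast_mul (by norm_num : (0:ℝ) ≤ 2)]

lemma two_pow_split {p : ℝ} (hp1 : 1 < p) (hp2 : p < 2) (s : ℕ) :
    (2:ℝ)^s = ((2:ℝ)^s)^(p/2) * ((2:ℝ)^s)^(1-p/2) := by
  rw [← Real.rpow_add (by positivity : (0:ℝ) < (2:ℝ)^s)]
  norm_num

/- ### measure bound : counting events -/

lemma measC {p ε : ℝ} (hp1 : 1 < p) (hp2 : p < 2)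
    (μ : Measure Ω) [IsProbabilityMeasure μ] (T : Ω ≃ᵐ Ω) (hT : MeasurePreserving (⇑T) μ μ)
    (g : Ω → ℝ) (hg : Measurable g) (s : ℕ) :
    μ (Cset p ε g T s) ≤ ENNReal.ofReal (3 * ((2:ℝ)^(p/2))^s) * μ (Gset ε g s) := by
  have hGm : MeasurableSet (Gset ε g s) := measurableSet_lt measurable_const hg.abs
  have hcm1 : ∀ m : ℕ, Measurable fun ω => (Gset ε g s).indicator (1 : Ω → ℝ≥0∞) (T^[m] ω) :=
    fun m => (measurable_one.indicator hGm).comp (T.measurable.iterate m)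
  have hcm : Measurable (cnt ε g T s) := by
    apply Finset.measurable_sum
    intro m _
    exact hcm1 m
  have hL0 : ((Lwin p s : ℝ≥0∞)) ≠ 0 := by
    simp [(Lwin_pos hp1 hp2 s).ne']
  have hLtop : ((Lwin p s : ℝ≥0∞)) ≠ ⊤ := by simp
  have hmark : μ (Cset p ε g T s) ≤ (∫⁻ ω, cnt ε g T s ω ∂μ) / (Lwin p s : ℝ≥0∞) :=
    meas_ge_le_lintegral_div hcm.aemeasurable hL0 hLtop
  have hint : ∫⁻ ω, cnt ε g T s ω ∂μ
      = ((2^(s+2) - 2^s : ℕ) : ℝ≥0∞) * μ (Gset ε g s) := by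
    simp only [cnt]
    rw [lintegral_finset_sum _ (fun m _ => hcm1 m)]
    have hone : ∀ m : ℕ, ∫⁻ ω, (Gset ε g s).indicator (1 : Ω → ℝ≥0∞) (T^[m] ω) ∂μ
        = μ (Gset ε g s) := by
      intro m
      rw [(hT.iterate m).lintegral_comp (measurable_one.indicator hGm)]
      exact lintegral_indicator_one hGm
    simp only [hone, Finset.sum_const, Nat.card_Ico, nsmul_eq_mul]
  have hcast : ((2^(s+2) - 2^s : ℕ) : ℝ≥0∞) ≤
      ENNReal.ofReal (3 * ((2:ℝ)^(p/2))^s) * (Lwin p s : ℝ≥0∞) := by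
    have hkey : (2:ℝ)^s ≤ ((2:ℝ)^(p/2))^s * (Lwin p s : ℝ) := by
      rw [pow_base_swap s (p/2)]
      calc (2:ℝ)^s = ((2:ℝ)^s)^(p/2) * ((2:ℝ)^s)^(1-p/2) := two_pow_split hp1 hp2 s
        _ ≤ ((2:ℝ)^s)^(p/2) * (Lwin p s : ℝ) := by
            apply mul_le_mul_of_nonneg_left (Lwin_lb hp1 hp2 s)
            positivity
    have hreal : ((2^(s+2) - 2^s : ℕ) : ℝ) ≤ 3 * ((2:ℝ)^(p/2))^s * (Lwin p s : ℝ) := by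
      have hle : (2:ℕ)^s ≤ 2^(s+2) := Nat.pow_le_pow_right (by norm_num) (by omega)
      rw [Nat.cast_sub hle]
      push_cast
      have : (2:ℝ)^(s+2) - 2^s = 3 * (2:ℝ)^s := by ring
      rw [this]
      linarith
    calc ((2^(s+2) - 2^s : ℕ) : ℝ≥0∞) = ENNReal.ofReal ((2^(s+2) - 2^s : ℕ) : ℝ) :=
          (ENNReal.ofReal_natCast _).symm
      _ ≤ ENNReal.ofReal (3 * ((2:ℝ)^(p/2))^s * (Lwin p s : ℝ)) :=
          ENNReal.ofReal_le_ofReal hreal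
      _ = ENNReal.ofReal (3 * ((2:ℝ)^(p/2))^s) * ENNReal.ofReal ((Lwin p s : ℝ)) := by
          rw [ENNReal.ofReal_mul (by positivity)]
      _ = ENNReal.ofReal (3 * ((2:ℝ)^(p/2))^s) * (Lwin p s : ℝ≥0∞) := by
          rw [ENNReal.ofReal_natCast]
  refine hmark.trans ?_
  rw [hint]
  apply ENNReal.div_le_of_le_mul
  calc ((2^(s+2) - 2^s : ℕ) : ℝ≥0∞) * μ (Gset ε g s)
      ≤ (ENNReal.ofReal (3 * ((2:ℝ)^(p/2))^s) * (Lwin p s : ℝ≥0∞)) * μ (Gset ε g s) :=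
        mul_le_mul_left hcast _
    _ = ENNReal.ofReal (3 * ((2:ℝ)^(p/2))^s) * μ (Gset ε g s) * (Lwin p s : ℝ≥0∞) := by
        ring

/- ### measure bound : window events -/

lemma measE {p ε : ℝ} (hp1 : 1 < p) (hp2 : p < 2) (hε : 0 < ε)
    (μ : Measure Ω) [IsProbabilityMeasure μ] (T : Ω ≃ᵐ Ω) (hT : MeasurePreserving (⇑T) μ μ)
    (h : Ω → ℝ) (hh : Measurable h) {s : ℕ} (hs : 3 ≤ s) :
    μ (⋃ i ∈ Finset.range (Nwin p s), Eset p ε h T s i) ≤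
      ENNReal.ofReal ((16/ε) * Real.sqrt 2 ^ s) *
        ∫⁻ x, ENNReal.ofReal (phi p ε h s x) ∂μ := by
  set I := ∫⁻ x, ENNReal.ofReal (phi p ε h s x) ∂μ with hI
  have hphi_m : Measurable fun x => ENNReal.ofReal (phi p ε h s x) := by
    apply ENNReal.measurable_ofReal.comp
    exact Measurable.ite (measurableSet_lt measurable_const hh.abs) hh.abs measurable_const
  have hlam := lam_lb hs
  have hlampos := lam_pos hs
  have hQpos : (0:ℝ) < Real.sqrt 2 ^ s := pow_pos (Real.sqrt_pos.mpr (by norm_num)) s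
  have htpos : 0 < tcut ε s / 2 := by
    rw [tcut]; positivity
  have hper : ∀ i : ℕ, μ (Eset p ε h T s i) ≤
      ((Lwin p s : ℝ≥0∞) * I) / ENNReal.ofReal (tcut ε s / 2) := by
    intro i
    have hf : Measurable fun ω => ∑ j ∈ Finset.range (Lwin p s),
        ENNReal.ofReal (phi p ε h s (T^[2^s + i * Lwin p s + j] ω)) := by
      apply Finset.measurable_sum
      intro j _
      exact hphi_m.comp (T.measurable.iterate _)
    have hmark := meas_ge_le_lintegral_div (μ := μ) hf.aemeasurable
      (ENNReal.ofReal_pos.mpr htpos).ne' ENNReal.ofReal_ne_top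
    refine hmark.trans ?_
    apply ENNReal.div_le_div_right
    have hmeasj : ∀ j : ℕ, Measurable fun ω =>
        ENNReal.ofReal (phi p ε h s ((⇑T)^[2^s + i * Lwin p s + j] ω)) :=
      fun j => hphi_m.comp (T.measurable.iterate _)
    rw [lintegral_finset_sum _ (fun j _ => hmeasj j)]
    have : ∀ j : ℕ, ∫⁻ ω, ENNReal.ofReal (phi p ε h s (T^[2^s + i * Lwin p s + j] ω)) ∂μ = I := by
      intro j
      rw [(hT.iterate _).lintegral_comp hphi_m]
    simp only [this, Finset.sum_const, Finset.card_range, nsmul_eq_mul]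
    exact le_rfl
  calc μ (⋃ i ∈ Finset.range (Nwin p s), Eset p ε h T s i)
      ≤ ∑ i ∈ Finset.range (Nwin p s), μ (Eset p ε h T s i) := measure_biUnion_finset_le _ _
    _ ≤ ∑ _i ∈ Finset.range (Nwin p s),
          ((Lwin p s : ℝ≥0∞) * I) / ENNReal.ofReal (tcut ε s / 2) :=
        Finset.sum_le_sum (fun i _ => hper i)
    _ = (Nwin p s : ℝ≥0∞) * (((Lwin p s : ℝ≥0∞) * I) / ENNReal.ofReal (tcut ε s / 2)) := by
        rw [Finset.sum_const, Finset.card_range, nsmul_eq_mul]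
    _ ≤ ENNReal.ofReal ((16/ε) * Real.sqrt 2 ^ s) * I := by
        rw [mul_div_assoc']
        apply ENNReal.div_le_of_le_mul
        have hNL : ((Nwin p s * Lwin p s : ℕ) : ℝ≥0∞) ≤
            ENNReal.ofReal ((16/ε) * Real.sqrt 2 ^ s) * ENNReal.ofReal (tcut ε s / 2) := by
          have hNLnat : Nwin p s * Lwin p s ≤ 2^(s+1) := by
            have h1 : (2^s / Lwin p s) * Lwin p s ≤ 2^s := Nat.div_mul_le_self _ _
            have h2 : Lwin p s ≤ 2^s := Lwin_le hp1 hp2 s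
            have h3 : 2^(s+1) = 2 * 2^s := by ring
            have h4 : (2^s / Lwin p s + 1) * Lwin p s
                = (2^s / Lwin p s) * Lwin p s + Lwin p s := by ring
            rw [Nwin]
            omega
          have hreal : ((Nwin p s * Lwin p s : ℕ) : ℝ) ≤
              (16/ε) * Real.sqrt 2 ^ s * (tcut ε s / 2) := by
            have hcast : ((Nwin p s * Lwin p s : ℕ) : ℝ) ≤ ((2:ℝ)^(s+1)) := by
              exact_mod_cast hNLnat
            have hsq : Real.sqrt 2 ^ s * Real.sqrt 2 ^ s = (2:ℝ)^s := by
              rw [← pow_add, ← two_mul, pow_mul, Real.sq_sqrt (by norm_num : (0:ℝ) ≤ 2)]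
            have hts : tcut ε s / 2 ≥ ε/8 * Real.sqrt 2 ^ s := by
              rw [tcut]
              nlinarith [hlam, hQpos]
            calc ((Nwin p s * Lwin p s : ℕ) : ℝ) ≤ (2:ℝ)^(s+1) := hcast
              _ = 2 * ((2:ℝ)^s) := by ring
              _ = 2 * (Real.sqrt 2 ^ s * Real.sqrt 2 ^ s) := by rw [hsq]
              _ ≤ (16/ε) * Real.sqrt 2 ^ s * (ε/8 * Real.sqrt 2 ^ s) := by
                  have : (16/ε) * (ε/8) = 2 := by field_simp; ring
                  nlinarith [hQpos]
              _ ≤ (16/ε) * Real.sqrt 2 ^ s * (tcut ε s / 2) := by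
                  apply mul_le_mul_of_nonneg_left hts
                  positivity
          calc ((Nwin p s * Lwin p s : ℕ) : ℝ≥0∞)
              = ENNReal.ofReal ((Nwin p s * Lwin p s : ℕ) : ℝ) := (ENNReal.ofReal_natCast _).symm
            _ ≤ ENNReal.ofReal ((16/ε) * Real.sqrt 2 ^ s * (tcut ε s / 2)) :=
                ENNReal.ofReal_le_ofReal hreal
            _ = ENNReal.ofReal ((16/ε) * Real.sqrt 2 ^ s) * ENNReal.ofReal (tcut ε s / 2) := by
                rw [ENNReal.ofReal_mul (by positivity)]
        calc (Nwin p s : ℝ≥0∞) * ((Lwin p s : ℝ≥0∞) * I)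
            = ((Nwin p s * Lwin p s : ℕ) : ℝ≥0∞) * I := by push_cast; ring
          _ ≤ (ENNReal.ofReal ((16/ε) * Real.sqrt 2 ^ s) * ENNReal.ofReal (tcut ε s / 2)) * I :=
              mul_le_mul_left hNL _
          _ = ENNReal.ofReal ((16/ε) * Real.sqrt 2 ^ s) * I * ENNReal.ofReal (tcut ε s / 2) := by
              ring


/- ### pointwise real helpers -/

lemma geom_bound {γ δ c a : ℝ} (hγ : 1 < γ) (hδ : 1 < δ) (hc : 0 < c) (ha : 0 ≤ a)
    (hrel : γ ≤ δ ^ a) (X : ℝ) :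
    (∑' s : ℕ, (if c * δ ^ s ≤ X then ENNReal.ofReal (γ ^ s) else 0)) ≤
      ENNReal.ofReal (γ / (γ - 1) * (max (X / c) 1) ^ a) := by
  have hγ0 : (0:ℝ) < γ := lt_trans one_pos hγ
  have hδ0 : (0:ℝ) < δ := lt_trans one_pos hδ
  by_cases hXc : X < c
  · have hzero : ∀ s : ℕ, (if c * δ ^ s ≤ X then ENNReal.ofReal (γ ^ s) else 0) = 0 := by
      intro s
      rw [if_neg]
      push_neg
      calc X < c := hXc
        _ ≤ c * δ ^ s := le_mul_of_one_le_right hc.le (one_le_pow₀ hδ.le)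
    simp only [hzero, tsum_zero]
    exact zero_le
  · push_neg at hXc
    have hX0 : 0 < X := lt_of_lt_of_le hc hXc
    set Y := X / c with hY
    have hY1 : 1 ≤ Y := (one_le_div hc).mpr hXc
    have hY0 : 0 < Y := lt_of_lt_of_le one_pos hY1
    set S := Nat.floor (Real.logb δ Y) with hS
    have hlogb0 : 0 ≤ Real.logb δ Y := Real.logb_nonneg hδ hY1
    have hcond : ∀ s : ℕ, c * δ ^ s ≤ X → s ≤ S := by
      intro s hs
      have h1 : (δ:ℝ) ^ s ≤ Y := by
        rw [hY, le_div_iff₀ hc]; linarith [hs]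
      have h2 : (s : ℝ) * Real.log δ ≤ Real.log Y := by
        rw [← Real.log_pow]
        exact Real.log_le_log (by positivity) h1
      have h3 : (s:ℝ) ≤ Real.logb δ Y := by
        rw [Real.logb, le_div_iff₀ (Real.log_pos hδ)]
        linarith
      exact Nat.le_floor h3
    have htsum : (∑' s : ℕ, (if c * δ ^ s ≤ X then ENNReal.ofReal (γ ^ s) else 0)) =
        ∑ s ∈ Finset.range (S+1), (if c * δ ^ s ≤ X then ENNReal.ofReal (γ ^ s) else 0) := by
      apply tsum_eq_sum
      intro s hs
      rw [if_neg]
      intro hcon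
      exact hs (Finset.mem_range.mpr (Nat.lt_succ_of_le (hcond s hcon)))
    rw [htsum]
    have h4 : (∑ s ∈ Finset.range (S+1), (if c * δ ^ s ≤ X then ENNReal.ofReal (γ ^ s) else 0)) ≤
        ∑ s ∈ Finset.range (S+1), ENNReal.ofReal (γ ^ s) := by
      apply Finset.sum_le_sum
      intro i _
      split_ifs
      · exact le_rfl
      · exact zero_le
    refine h4.trans ?_
    rw [← ENNReal.ofReal_sum_of_nonneg (fun i _ => by positivity)]
    apply ENNReal.ofReal_le_ofReal
    have hgeom : (∑ s ∈ Finset.range (S+1), γ ^ s) = (γ ^ (S+1) - 1)/(γ - 1) := geom_sum_eq hγ.ne' (S+1)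
    rw [hgeom]
    have hδS : (δ:ℝ) ^ S ≤ Y := by
      have h5 : (δ:ℝ) ^ (S:ℝ) ≤ δ ^ (Real.logb δ Y) :=
        Real.rpow_le_rpow_of_exponent_le hδ.le (Nat.floor_le hlogb0)
      rw [Real.rpow_logb hδ0 hδ.ne' hY0] at h5
      rwa [Real.rpow_natCast] at h5
    have hγS : γ ^ S ≤ Y ^ a := by
      calc γ ^ S ≤ (δ ^ a) ^ S := pow_le_pow_left₀ hγ0.le hrel S
        _ = ((δ:ℝ) ^ S) ^ a := by
            rw [← Real.rpow_natCast (δ ^ a) S, ← Real.rpow_mul hδ0.le, mul_comm,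
              Real.rpow_mul hδ0.le, Real.rpow_natCast]
        _ ≤ Y ^ a := Real.rpow_le_rpow (by positivity) hδS ha
    have hmax : max Y 1 = Y := max_eq_left hY1
    rw [hmax]
    have hfin : γ ^ (S+1) - 1 ≤ γ * Y ^ a := by
      have h6 : γ ^ (S+1) = γ * γ ^ S := by ring
      nlinarith [pow_pos hγ0 S]
    calc (γ ^ (S+1) - 1)/(γ - 1) ≤ (γ * Y ^ a)/(γ - 1) := by
          gcongr

      _ = γ/(γ-1) * Y ^ a := by ring
  


lemma pow_base_swap' {x : ℝ} (hx : 0 ≤ x) (s : ℕ) (y : ℝ) : (x^(y:ℝ))^s = (x^s)^(y:ℝ) := by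
  rw [← Real.rpow_natCast (x^(y:ℝ)) s, ← Real.rpow_mul hx, mul_comm, Real.rpow_natCast_mul hx]

lemma max_rpow_le {u a : ℝ} (hu : 0 ≤ u) (ha : 0 ≤ a) :
    (max u 1) ^ (a:ℝ) ≤ u ^ (a:ℝ) + 1 := by
  rcases le_total u 1 with h | h
  · rw [max_eq_right h, Real.one_rpow]
    have : 0 ≤ u ^ (a:ℝ) := Real.rpow_nonneg hu a
    linarith
  · rw [max_eq_left h]
    have : 0 ≤ (1:ℝ) := one_pos.le
    linarith [Real.rpow_nonneg hu a]

lemma self_le_one_add_rpow {u q : ℝ} (hu : 0 ≤ u) (hq : 1 ≤ q) :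
    u ≤ 1 + u ^ (q:ℝ) := by
  rcases le_total u 1 with h | h
  · linarith [Real.rpow_nonneg hu q]
  · have h1 : u ^ (1:ℝ) ≤ u ^ (q:ℝ) := Real.rpow_le_rpow_of_exponent_le h hq
    rw [Real.rpow_one] at h1
    linarith

lemma mul_rpow_self {u q : ℝ} (hu : 0 ≤ u) (hq : 0 < q) :
    u * u ^ (q:ℝ) = u ^ (q+1:ℝ) := by
  rcases eq_or_lt_of_le hu with h0 | h0
  · rw [← h0, Real.zero_rpow hq.ne', Real.zero_rpow (by linarith), mul_zero]
  · rw [show u * u ^ (q:ℝ) = u^(1:ℝ) * u^(q:ℝ) by rw [Real.rpow_one],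
      ← Real.rpow_add h0]
    ring_nf

lemma lint_rpow_lt_top {q : ℝ} (hq : 0 < q) (μ : Measure Ω) (f : Ω → ℝ)
    (hf : MemLp f (ENNReal.ofReal q) μ) :
    ∫⁻ x, ENNReal.ofReal (|f x| ^ (q:ℝ)) ∂μ < ⊤ := by
  have h1 := hf.integrable_norm_rpow (by simp [ENNReal.ofReal_eq_zero]; linarith)
    ENNReal.ofReal_ne_top
  rw [ENNReal.toReal_ofReal hq.le] at h1
  have h2 := h1.hasFiniteIntegral
  rw [MeasureTheory.hasFiniteIntegral_iff_norm] at h2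
  have h4 : ∫⁻ x, ENNReal.ofReal (|f x| ^ (q:ℝ)) ∂μ
      = ∫⁻ a, ENNReal.ofReal ‖‖f a‖ ^ (q:ℝ)‖ ∂μ :=
    lintegral_congr fun x => by
      rw [Real.norm_eq_abs, Real.norm_eq_abs,
        abs_of_nonneg (Real.rpow_nonneg (abs_nonneg _) q)]
  rw [h4]
  exact h2

/- ### summability : counting side -/

lemma sumC_ne_top {p ε : ℝ} (hp1 : 1 < p) (hp2 : p < 2) (hε : 0 < ε)
    (μ : Measure Ω) [IsProbabilityMeasure μ] (g : Ω → ℝ) (hg : Measurable g)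
    (hgint : ∫⁻ x, ENNReal.ofReal (|g x| ^ (p:ℝ)) ∂μ < ⊤) :
    (∑' s : ℕ, ENNReal.ofReal (3 * ((2:ℝ)^(p/2))^(s+8)) * μ (Gset ε g (s+8))) ≠ ⊤ := by
  have hγ1 : 1 < (2:ℝ)^(p/2) :=
    (Real.one_lt_rpow_iff_of_pos (by norm_num)).mpr (Or.inl ⟨by norm_num, by linarith⟩)
  have hγ0 : (0:ℝ) < (2:ℝ)^(p/2) := lt_trans one_pos hγ1
  have hQ1 := one_lt_sqrt_two
  have hrel : (2:ℝ)^(p/2) ≤ Real.sqrt 2 ^ (p:ℝ) := by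
    rw [Real.sqrt_eq_rpow, ← Real.rpow_mul (by norm_num : (0:ℝ) ≤ 2)]
    apply le_of_eq
    congr 1
    ring
  have hGm : ∀ u : ℕ, MeasurableSet (Gset ε g u) :=
    fun u => measurableSet_lt measurable_const hg.abs
  have hc2 : 0 < ε/2 := by linarith
  -- pointwise bound on each term
  have hmono : ∀ (s : ℕ) (x : Ω),
      ENNReal.ofReal (3 * ((2:ℝ)^(p/2))^(s+8)) * (Gset ε g (s+8)).indicator (1 : Ω → ℝ≥0∞) x ≤
      3 * (if (ε/2) * Real.sqrt 2 ^ (s+8) ≤ |g x|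
        then ENNReal.ofReal (((2:ℝ)^(p/2))^(s+8)) else 0) := by
    intro s x
    by_cases hx : x ∈ Gset ε g (s+8)
    · rw [Set.indicator_of_mem hx]
      have hcond : (ε/2) * Real.sqrt 2 ^ (s+8) ≤ |g x| := by
        have h1 : Real.sqrt 2 ^ (s+8) ≤ lam (s+8) := lam_lb (by omega)
        have h2 : ε/2 * lam (s+8) < |g x| := hx
        nlinarith
      rw [if_pos hcond, ENNReal.ofReal_mul (by norm_num : (0:ℝ) ≤ 3)]
      simp [ENNReal.ofReal_ofNat]
    · rw [Set.indicator_of_notMem hx, mul_zero]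
      exact zero_le
  have hptsum : ∀ x : Ω,
      (∑' s : ℕ, ENNReal.ofReal (3 * ((2:ℝ)^(p/2))^(s+8)) *
        (Gset ε g (s+8)).indicator (1 : Ω → ℝ≥0∞) x) ≤
      ENNReal.ofReal ((3 * ((2:ℝ)^(p/2) / ((2:ℝ)^(p/2) - 1))) *
        ((max (|g x| / (ε/2)) 1) ^ (p:ℝ))) := by
    intro x
    calc (∑' s : ℕ, ENNReal.ofReal (3 * ((2:ℝ)^(p/2))^(s+8)) *
          (Gset ε g (s+8)).indicator (1 : Ω → ℝ≥0∞) x)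
        ≤ ∑' s : ℕ, 3 * (if (ε/2) * Real.sqrt 2 ^ (s+8) ≤ |g x|
            then ENNReal.ofReal (((2:ℝ)^(p/2))^(s+8)) else 0) :=
          ENNReal.tsum_le_tsum (fun s => hmono s x)
      _ = 3 * ∑' s : ℕ, (if (ε/2) * Real.sqrt 2 ^ (s+8) ≤ |g x|
            then ENNReal.ofReal (((2:ℝ)^(p/2))^(s+8)) else 0) := ENNReal.tsum_mul_left
      _ ≤ 3 * ∑' u : ℕ, (if (ε/2) * Real.sqrt 2 ^ u ≤ |g x|
            then ENNReal.ofReal (((2:ℝ)^(p/2))^u) else 0) := by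
          apply mul_le_mul_right
          exact ENNReal.tsum_comp_le_tsum_of_injective (f := fun s : ℕ => s + 8)
            (add_left_injective 8) _
      _ ≤ 3 * ENNReal.ofReal (((2:ℝ)^(p/2)) / ((2:ℝ)^(p/2) - 1) *
            ((max (|g x| / (ε/2)) 1) ^ (p:ℝ))) := by
          apply mul_le_mul_right
          exact geom_bound hγ1 hQ1 hc2 (by linarith) hrel (|g x|)
      _ = ENNReal.ofReal ((3 * ((2:ℝ)^(p/2) / ((2:ℝ)^(p/2) - 1))) *
            ((max (|g x| / (ε/2)) 1) ^ (p:ℝ))) := by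
          rw [mul_assoc, ← ENNReal.ofReal_ofNat 3, ← ENNReal.ofReal_mul (by norm_num)]
  set Cg : ℝ := 3 * ((2:ℝ)^(p/2) / ((2:ℝ)^(p/2) - 1)) with hCg
  have hCg0 : 0 < Cg := by
    rw [hCg]
    have : 0 < (2:ℝ)^(p/2) - 1 := by linarith
    positivity
  have hfinal : ∀ x : Ω, ENNReal.ofReal (Cg * ((max (|g x| / (ε/2)) 1) ^ (p:ℝ))) ≤
      ENNReal.ofReal (Cg / (ε/2)^(p:ℝ)) * ENNReal.ofReal (|g x| ^ (p:ℝ)) +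
        ENNReal.ofReal Cg := by
    intro x
    have h1 : (max (|g x| / (ε/2)) 1) ^ (p:ℝ) ≤ (|g x| / (ε/2)) ^ (p:ℝ) + 1 :=
      max_rpow_le (by positivity) (by linarith)
    have h2 : (|g x| / (ε/2)) ^ (p:ℝ) = |g x| ^ (p:ℝ) / (ε/2) ^ (p:ℝ) :=
      Real.div_rpow (abs_nonneg _) hc2.le p
    have h3 : Cg * ((max (|g x| / (ε/2)) 1) ^ (p:ℝ)) ≤
        Cg / (ε/2)^(p:ℝ) * (|g x| ^ (p:ℝ)) + Cg := by
      rw [h2] at h1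
      have hd : 0 < (ε/2) ^ (p:ℝ) := Real.rpow_pos_of_pos hc2 p
      have := mul_le_mul_of_nonneg_left h1 hCg0.le
      calc Cg * ((max (|g x| / (ε/2)) 1) ^ (p:ℝ))
          ≤ Cg * (|g x| ^ (p:ℝ) / (ε/2) ^ (p:ℝ) + 1) := this
        _ = Cg / (ε/2)^(p:ℝ) * (|g x| ^ (p:ℝ)) + Cg := by field_simp
    calc ENNReal.ofReal (Cg * ((max (|g x| / (ε/2)) 1) ^ (p:ℝ)))
        ≤ ENNReal.ofReal (Cg / (ε/2)^(p:ℝ) * (|g x| ^ (p:ℝ)) + Cg) :=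
          ENNReal.ofReal_le_ofReal h3
      _ ≤ ENNReal.ofReal (Cg / (ε/2)^(p:ℝ) * (|g x| ^ (p:ℝ))) + ENNReal.ofReal Cg :=
          ENNReal.ofReal_add_le
      _ = ENNReal.ofReal (Cg / (ε/2)^(p:ℝ)) * ENNReal.ofReal (|g x| ^ (p:ℝ)) +
            ENNReal.ofReal Cg := by
          rw [ENNReal.ofReal_mul (by positivity)]
  have hmg : Measurable fun x => ENNReal.ofReal (|g x| ^ (p:ℝ)) :=
    ENNReal.measurable_ofReal.comp
      ((Real.continuous_rpow_const (by linarith : (0:ℝ) ≤ p)).measurable.comp hg.abs)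
  have hmind : ∀ s : ℕ, Measurable fun x =>
      ENNReal.ofReal (3 * ((2:ℝ)^(p/2))^(s+8)) *
        (Gset ε g (s+8)).indicator (1 : Ω → ℝ≥0∞) x :=
    fun s => (measurable_one.indicator (hGm (s+8))).const_mul _
  have hchain : (∑' s : ℕ, ENNReal.ofReal (3 * ((2:ℝ)^(p/2))^(s+8)) * μ (Gset ε g (s+8))) ≤
      ENNReal.ofReal (Cg / (ε/2)^(p:ℝ)) * ∫⁻ x, ENNReal.ofReal (|g x| ^ (p:ℝ)) ∂μ +
        ENNReal.ofReal Cg := by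
    calc (∑' s : ℕ, ENNReal.ofReal (3 * ((2:ℝ)^(p/2))^(s+8)) * μ (Gset ε g (s+8)))
        = ∑' s : ℕ, ∫⁻ x, ENNReal.ofReal (3 * ((2:ℝ)^(p/2))^(s+8)) *
            (Gset ε g (s+8)).indicator (1 : Ω → ℝ≥0∞) x ∂μ := by
          congr 1
          funext s
          rw [lintegral_const_mul _ (measurable_one.indicator (hGm (s+8))),
            lintegral_indicator_one (hGm (s+8))]
      _ = ∫⁻ x, ∑' s : ℕ, ENNReal.ofReal (3 * ((2:ℝ)^(p/2))^(s+8)) *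
            (Gset ε g (s+8)).indicator (1 : Ω → ℝ≥0∞) x ∂μ :=
          (lintegral_tsum (fun s => (hmind s).aemeasurable)).symm
      _ ≤ ∫⁻ x, (ENNReal.ofReal (Cg / (ε/2)^(p:ℝ)) * ENNReal.ofReal (|g x| ^ (p:ℝ)) +
            ENNReal.ofReal Cg) ∂μ := by
          apply lintegral_mono
          intro x
          exact le_trans (hptsum x) (hfinal x)
      _ = ENNReal.ofReal (Cg / (ε/2)^(p:ℝ)) * ∫⁻ x, ENNReal.ofReal (|g x| ^ (p:ℝ)) ∂μ +
            ENNReal.ofReal Cg * μ Set.univ := by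
          rw [lintegral_add_right _ measurable_const, lintegral_const,
            lintegral_const_mul _ hmg]
      _ = _ := by rw [measure_univ, mul_one]
  apply ne_top_of_le_ne_top _ hchain
  apply ENNReal.add_ne_top.mpr
  constructor
  · exact (ENNReal.mul_lt_top ENNReal.ofReal_lt_top hgint).ne
  · exact ENNReal.ofReal_ne_top


/- ### summability : window side -/

lemma sumE_ne_top {p r ε : ℝ} (hp1 : 1 < p) (hp2 : p < 2) (hr : 2 < r)
    (hpr1 : (p-1)*(r-1) = 1) (hε : 0 < ε)
    (μ : Measure Ω) [IsProbabilityMeasure μ] (h : Ω → ℝ) (hh : Measurable h)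
    (hhint : ∫⁻ x, ENNReal.ofReal (|h x| ^ (r:ℝ)) ∂μ < ⊤) :
    (∑' s : ℕ, ENNReal.ofReal ((16/ε) * Real.sqrt 2 ^ (s+8)) *
        ∫⁻ x, ENNReal.ofReal (phi p ε h (s+8) x) ∂μ) ≠ ⊤ := by
  have hQ1 := one_lt_sqrt_two
  have hQ0 : (0:ℝ) < Real.sqrt 2 := lt_trans one_pos hQ1
  set δ : ℝ := Real.sqrt 2 ^ (p-1:ℝ) with hδdef
  have hδ1 : 1 < δ :=
    (Real.one_lt_rpow_iff_of_pos hQ0).mpr (Or.inl ⟨hQ1, by linarith⟩)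
  have hrel : Real.sqrt 2 ≤ δ ^ (r-1:ℝ) := by
    rw [hδdef, ← Real.rpow_mul (Real.sqrt_nonneg 2), hpr1, Real.rpow_one]
  have hc16 : 0 < ε/16 := by linarith
  -- lower bound for the truncation level
  have hK : ∀ u : ℕ, 3 ≤ u → (ε/16) * δ^u ≤ Kcut p ε u := by
    intro u hu
    have hLpos : (0:ℝ) < (Lwin p u : ℝ) := by
      exact_mod_cast Lwin_pos hp1 hp2 u
    have hLub : (Lwin p u : ℝ) ≤ 2 * ((2:ℝ)^u) ^ (1 - p/2) := Lwin_ub hp1 hp2 u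
    have hlamu : Real.sqrt 2 ^ u ≤ lam u := lam_lb hu
    have hQu0 : (0:ℝ) < Real.sqrt 2 ^ u := pow_pos hQ0 u
    have h2u : (2:ℝ)^u = (Real.sqrt 2 ^ u)^(2:ℕ) := by
      rw [← pow_mul, mul_comm u 2, pow_mul, Real.sq_sqrt (by norm_num : (0:ℝ) ≤ 2)]
    have hxseq : ((2:ℝ)^u) ^ (1 - p/2) = (Real.sqrt 2 ^ u) ^ (2-p : ℝ) := by
      rw [h2u, ← Real.rpow_natCast ((Real.sqrt 2)^u) 2,
        ← Real.rpow_mul (le_of_lt hQu0)]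
      congr 1
      push_cast
      ring
    have hδu : δ^u = (Real.sqrt 2 ^ u) ^ (p-1:ℝ) := pow_base_swap' (Real.sqrt_nonneg 2) u (p-1)
    have hsplit : (Real.sqrt 2 ^ u) ^ (p-1:ℝ) * (Real.sqrt 2 ^ u) ^ (2-p:ℝ)
        = Real.sqrt 2 ^ u := by
      rw [← Real.rpow_add hQu0]
      rw [show (p-1) + (2-p) = (1:ℝ) by ring, Real.rpow_one]
    rw [Kcut, le_div_iff₀ (by positivity : (0:ℝ) < 2 * (Lwin p u : ℝ))]
    have hδu0 : 0 < δ^u := pow_pos (lt_trans one_pos hδ1) u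
    calc (ε/16) * δ^u * (2 * (Lwin p u : ℝ))
        ≤ (ε/16) * δ^u * (2 * (2 * (((2:ℝ)^u) ^ (1 - p/2)))) := by
          apply mul_le_mul_of_nonneg_left _ (by positivity)
          linarith
      _ = (ε/4) * (δ^u * (((2:ℝ)^u) ^ (1 - p/2))) := by ring
      _ = (ε/4) * (Real.sqrt 2 ^ u) := by rw [hδu, hxseq, hsplit]
      _ ≤ tcut ε u := by
          rw [tcut]
          apply mul_le_mul_of_nonneg_left hlamu (by linarith)
  -- measurability
  have hphi_m : ∀ u : ℕ, Measurable fun x => ENNReal.ofReal (phi p ε h u x) := by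
    intro u
    apply ENNReal.measurable_ofReal.comp
    exact Measurable.ite (measurableSet_lt measurable_const hh.abs) hh.abs measurable_const
  -- pointwise bound for each term
  have hmono : ∀ (s : ℕ) (x : Ω),
      ENNReal.ofReal ((16/ε) * Real.sqrt 2 ^ (s+8)) * ENNReal.ofReal (phi p ε h (s+8) x) ≤
      (ENNReal.ofReal (16/ε) * ENNReal.ofReal (|h x|)) *
        (if (ε/16) * δ^(s+8) ≤ |h x| then ENNReal.ofReal (Real.sqrt 2 ^ (s+8)) else 0) := by
    intro s x
    rw [phi]
    split_ifs with hx hcond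
    · apply le_of_eq
      rw [ENNReal.ofReal_mul (by positivity : (0:ℝ) ≤ 16/ε)]
      ring
    · exfalso
      exact hcond (le_trans (hK (s+8) (by omega)) hx.le)
    all_goals simp
  -- pointwise bound for the series
  set CQ : ℝ := Real.sqrt 2 / (Real.sqrt 2 - 1) with hCQ
  have hCQ0 : 0 < CQ := by
    rw [hCQ]
    have : 0 < Real.sqrt 2 - 1 := by linarith
    positivity
  have hptsum : ∀ x : Ω,
      (∑' s : ℕ, ENNReal.ofReal ((16/ε) * Real.sqrt 2 ^ (s+8)) *
        ENNReal.ofReal (phi p ε h (s+8) x)) ≤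
      (ENNReal.ofReal (16/ε) * ENNReal.ofReal (|h x|)) *
        ENNReal.ofReal (CQ * ((max (|h x| / (ε/16)) 1) ^ (r-1:ℝ))) := by
    intro x
    calc (∑' s : ℕ, ENNReal.ofReal ((16/ε) * Real.sqrt 2 ^ (s+8)) *
          ENNReal.ofReal (phi p ε h (s+8) x))
        ≤ ∑' s : ℕ, (ENNReal.ofReal (16/ε) * ENNReal.ofReal (|h x|)) *
            (if (ε/16) * δ^(s+8) ≤ |h x| then ENNReal.ofReal (Real.sqrt 2 ^ (s+8)) else 0) :=
          ENNReal.tsum_le_tsum (fun s => hmono s x)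
      _ = (ENNReal.ofReal (16/ε) * ENNReal.ofReal (|h x|)) *
            ∑' s : ℕ, (if (ε/16) * δ^(s+8) ≤ |h x|
              then ENNReal.ofReal (Real.sqrt 2 ^ (s+8)) else 0) := ENNReal.tsum_mul_left
      _ ≤ (ENNReal.ofReal (16/ε) * ENNReal.ofReal (|h x|)) *
            ∑' u : ℕ, (if (ε/16) * δ^u ≤ |h x|
              then ENNReal.ofReal (Real.sqrt 2 ^ u) else 0) := by
          apply mul_le_mul_right
          exact ENNReal.tsum_comp_le_tsum_of_injective (f := fun s : ℕ => s + 8)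
            (add_left_injective 8) _
      _ ≤ (ENNReal.ofReal (16/ε) * ENNReal.ofReal (|h x|)) *
            ENNReal.ofReal (CQ * ((max (|h x| / (ε/16)) 1) ^ (r-1:ℝ))) := by
          apply mul_le_mul_right
          exact geom_bound hQ1 hδ1 hc16 (by linarith) hrel (|h x|)
  -- final real-side bound
  set A : ℝ := (16/ε) * CQ * (1/(ε/16)^(r-1:ℝ) + 1) with hA
  set B : ℝ := (16/ε) * CQ with hB
  have hA0 : 0 < A := by
    rw [hA]
    have : 0 < (ε/16)^(r-1:ℝ) := Real.rpow_pos_of_pos hc16 _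
    positivity
  have hB0 : 0 < B := by rw [hB]; positivity
  have hfinal : ∀ x : Ω,
      (ENNReal.ofReal (16/ε) * ENNReal.ofReal (|h x|)) *
        ENNReal.ofReal (CQ * ((max (|h x| / (ε/16)) 1) ^ (r-1:ℝ))) ≤
      ENNReal.ofReal A * ENNReal.ofReal (|h x| ^ (r:ℝ)) + ENNReal.ofReal B := by
    intro x
    set X : ℝ := |h x| with hX
    have hX0 : 0 ≤ X := abs_nonneg _
    have hreal : (16/ε) * X * (CQ * ((max (X / (ε/16)) 1) ^ (r-1:ℝ))) ≤
        A * X ^ (r:ℝ) + B := by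
      have h1 : (max (X / (ε/16)) 1) ^ (r-1:ℝ) ≤ (X / (ε/16)) ^ (r-1:ℝ) + 1 :=
        max_rpow_le (by positivity) (by linarith)
      have h2 : (X / (ε/16)) ^ (r-1:ℝ) = X ^ (r-1:ℝ) / (ε/16) ^ (r-1:ℝ) :=
        Real.div_rpow hX0 hc16.le _
      have h3 : X * X ^ (r-1:ℝ) = X ^ (r:ℝ) := by
        rw [mul_rpow_self hX0 (by linarith : (0:ℝ) < r - 1)]
        norm_num
      have h4 : X ≤ 1 + X ^ (r:ℝ) := self_le_one_add_rpow hX0 (by linarith)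
      have h5 : 0 ≤ X ^ (r:ℝ) := Real.rpow_nonneg hX0 _
      have h6 : 0 < (ε/16)^(r-1:ℝ) := Real.rpow_pos_of_pos hc16 _
      have h7 : 0 ≤ X ^ (r-1:ℝ) := Real.rpow_nonneg hX0 _
      calc (16/ε) * X * (CQ * ((max (X / (ε/16)) 1) ^ (r-1:ℝ)))
          ≤ (16/ε) * CQ * (X * ((X / (ε/16)) ^ (r-1:ℝ) + 1)) := by
            have hh1 : X * ((max (X / (ε/16)) 1) ^ (r-1:ℝ)) ≤
                X * ((X / (ε/16)) ^ (r-1:ℝ) + 1) :=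
              mul_le_mul_of_nonneg_left h1 hX0
            have hc : 0 ≤ (16/ε) * CQ := by positivity
            nlinarith [mul_le_mul_of_nonneg_left hh1 hc]
        _ = (16/ε) * CQ * (X ^ (r:ℝ) / (ε/16)^(r-1:ℝ) + X) := by
            rw [h2]
            field_simp
            rw [← h3]
            ring
        _ ≤ (16/ε) * CQ * (X ^ (r:ℝ) / (ε/16)^(r-1:ℝ) + (1 + X ^ (r:ℝ))) := by
            have hc : 0 ≤ (16/ε) * CQ := by positivity
            nlinarith
        _ = A * X ^ (r:ℝ) + B := by
            rw [hA, hB]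
            field_simp
            ring
    calc (ENNReal.ofReal (16/ε) * ENNReal.ofReal X) *
          ENNReal.ofReal (CQ * ((max (X / (ε/16)) 1) ^ (r-1:ℝ)))
        = ENNReal.ofReal ((16/ε) * X * (CQ * ((max (X / (ε/16)) 1) ^ (r-1:ℝ)))) := by
          rw [← ENNReal.ofReal_mul (by positivity : (0:ℝ) ≤ 16/ε),
            ← ENNReal.ofReal_mul (by positivity : (0:ℝ) ≤ 16/ε * X)]
      _ ≤ ENNReal.ofReal (A * X ^ (r:ℝ) + B) := ENNReal.ofReal_le_ofReal hreal
      _ ≤ ENNReal.ofReal (A * X ^ (r:ℝ)) + ENNReal.ofReal B := ENNReal.ofReal_add_le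
      _ = ENNReal.ofReal A * ENNReal.ofReal (X ^ (r:ℝ)) + ENNReal.ofReal B := by
          rw [ENNReal.ofReal_mul hA0.le]
  have hmh : Measurable fun x => ENNReal.ofReal (|h x| ^ (r:ℝ)) :=
    ENNReal.measurable_ofReal.comp
      ((Real.continuous_rpow_const (by linarith : (0:ℝ) ≤ r)).measurable.comp hh.abs)
  have hchain : (∑' s : ℕ, ENNReal.ofReal ((16/ε) * Real.sqrt 2 ^ (s+8)) *
        ∫⁻ x, ENNReal.ofReal (phi p ε h (s+8) x) ∂μ) ≤
      ENNReal.ofReal A * ∫⁻ x, ENNReal.ofReal (|h x| ^ (r:ℝ)) ∂μ + ENNReal.ofReal B := by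
    calc (∑' s : ℕ, ENNReal.ofReal ((16/ε) * Real.sqrt 2 ^ (s+8)) *
          ∫⁻ x, ENNReal.ofReal (phi p ε h (s+8) x) ∂μ)
        = ∑' s : ℕ, ∫⁻ x, ENNReal.ofReal ((16/ε) * Real.sqrt 2 ^ (s+8)) *
            ENNReal.ofReal (phi p ε h (s+8) x) ∂μ := by
          congr 1
          funext s
          rw [lintegral_const_mul _ (hphi_m (s+8))]
      _ = ∫⁻ x, ∑' s : ℕ, ENNReal.ofReal ((16/ε) * Real.sqrt 2 ^ (s+8)) *
            ENNReal.ofReal (phi p ε h (s+8) x) ∂μ :=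
          (lintegral_tsum (fun s => ((hphi_m (s+8)).const_mul _).aemeasurable)).symm
      _ ≤ ∫⁻ x, (ENNReal.ofReal A * ENNReal.ofReal (|h x| ^ (r:ℝ)) + ENNReal.ofReal B) ∂μ := by
          apply lintegral_mono
          intro x
          exact le_trans (hptsum x) (hfinal x)
      _ = ENNReal.ofReal A * ∫⁻ x, ENNReal.ofReal (|h x| ^ (r:ℝ)) ∂μ +
            ENNReal.ofReal B * μ Set.univ := by
          rw [lintegral_add_right _ measurable_const, lintegral_const,
            lintegral_const_mul _ hmh]
      _ = _ := by rw [measure_univ, mul_one]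
  apply ne_top_of_le_ne_top _ hchain
  apply ENNReal.add_ne_top.mpr
  exact ⟨(ENNReal.mul_lt_top ENNReal.ofReal_lt_top hhint).ne, ENNReal.ofReal_ne_top⟩


/- ### the key almost-everywhere scale bound -/

lemma key {Ω : Type*} [MeasurableSpace Ω] (μ : Measure Ω) [IsProbabilityMeasure μ]
    (T : Ω ≃ᵐ Ω) (hT : MeasurePreserving (⇑T) μ μ)
    (p r : ℝ) (hp1 : 1 < p) (hp2 : p < 2) (hr : 2 < r) (hpr : p = r / (r - 1))
    (g : Ω → ℝ) (hg : Measurable g)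
    (hgLp : MemLp g (ENNReal.ofReal p) μ)
    (hcobLr : MemLp (fun ω => g ω - g (T ω)) (ENNReal.ofReal r) μ)
    (ε : ℝ) (hε : 0 < ε) :
    ∀ᵐ ω ∂μ, ∀ᶠ s : ℕ in atTop, ∀ n : ℕ, 2^s ≤ n → n < 2^(s+1) →
      |g ((⇑T)^[n] ω)| ≤ ε * lam s := by
  set h : Ω → ℝ := fun ω => g ω - g (T ω) with hhdef
  have hh : Measurable h := hg.sub (hg.comp T.measurable)
  have hgh : ∀ x, h x = g x - g (T x) := fun x => rfl
  have hrne : r - 1 ≠ 0 := by intro hc; rw [sub_eq_zero] at hc; linarith [hc.symm]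
  have hpr1 : (p-1)*(r-1) = 1 := by
    rw [hpr]
    field_simp
    ring
  have hgint := lint_rpow_lt_top (by linarith : (0:ℝ) < p) μ g hgLp
  have hhint := lint_rpow_lt_top (by linarith : (0:ℝ) < r) μ h hcobLr
  have hBmeas : (∑' s : ℕ, μ (Bbad p ε g h T (s+8))) ≠ ⊤ := by
    have hb : ∀ s : ℕ, μ (Bbad p ε g h T (s+8)) ≤
        ENNReal.ofReal (3 * ((2:ℝ)^(p/2))^(s+8)) * μ (Gset ε g (s+8)) +
        ENNReal.ofReal ((16/ε) * Real.sqrt 2 ^ (s+8)) *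
          ∫⁻ x, ENNReal.ofReal (phi p ε h (s+8) x) ∂μ := by
      intro s
      refine le_trans (measure_union_le _ _) ?_
      exact add_le_add (measC hp1 hp2 μ T hT g hg (s+8))
        (measE hp1 hp2 hε μ T hT h hh (by omega))
    refine ne_top_of_le_ne_top ?_ (ENNReal.tsum_le_tsum hb)
    rw [ENNReal.tsum_add]
    exact ENNReal.add_ne_top.mpr ⟨sumC_ne_top hp1 hp2 hε μ g hg hgint,
      sumE_ne_top hp1 hp2 hr hpr1 hε μ h hh hhint⟩
  filter_upwards [ae_eventually_notMem hBmeas] with ω hω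
  rw [eventually_atTop] at hω ⊢
  obtain ⟨k0, hk0⟩ := hω
  refine ⟨k0 + 8, fun s hs n hn1 hn2 => ?_⟩
  have h1 : ω ∉ Bbad p ε g h T s := by
    have h2 : k0 ≤ s - 8 := by omega
    have h3 := hk0 (s-8) h2
    rwa [show s - 8 + 8 = s by omega] at h3
  exact det hp1 hp2 hε T g h hgh (by omega) ω h1 n hn1 hn2

/- ### comparison with sqrt (n log log n) -/

lemma loglog_lb {s n : ℕ} (hs : 8 ≤ s) (hn1 : 2^s ≤ n) :
    Real.log s / 2 ≤ Real.log (Real.log n) := by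
  have hlog2 : (0.6931471803:ℝ) < Real.log 2 := Real.log_two_gt_d9
  have hs0 : (0:ℝ) < s := by positivity
  have hsl : (8:ℝ) ≤ (s:ℝ) := by exact_mod_cast hs
  have hlogs : Real.log 8 ≤ Real.log s := Real.log_le_log (by norm_num) hsl
  have hlog8 : Real.log 8 = 3 * Real.log 2 := by
    rw [show (8:ℝ) = 2^3 by norm_num, Real.log_pow]
    push_cast
    ring
  have hlogs2 : 2 ≤ Real.log s := by
    rw [hlog8] at hlogs
    linarith
  have hn0 : (0:ℝ) < n := by
    have : 0 < 2^s := Nat.pow_pos (by norm_num)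
    have : 0 < n := by omega
    exact_mod_cast this
  have hcast : ((2^s : ℕ) : ℝ) = (2:ℝ)^s := by push_cast; ring
  have hlogn : (s:ℝ) * Real.log 2 ≤ Real.log n := by
    have h1 : ((2:ℝ)^s) ≤ (n:ℝ) := by
      rw [← hcast]
      exact_mod_cast hn1
    have h2 := Real.log_le_log (by positivity) h1
    rwa [Real.log_pow] at h2
  have hsl2pos : (0:ℝ) < (s:ℝ) * Real.log 2 := by positivity
  have hll : Real.log ((s:ℝ) * Real.log 2) ≤ Real.log (Real.log n) :=
    Real.log_le_log hsl2pos hlogn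
  have hsplit : Real.log ((s:ℝ) * Real.log 2) = Real.log s + Real.log (Real.log 2) :=
    Real.log_mul (by positivity) (by positivity)
  -- lower bound for log (log 2)
  have hlb : Real.log (Real.log 2) ≥ 1 - 1 / Real.log 2 := by
    have h1 : Real.log (Real.log 2)⁻¹ ≤ (Real.log 2)⁻¹ - 1 :=
      Real.log_le_sub_one_of_pos (by positivity)
    rw [Real.log_inv] at h1
    have : -Real.log (Real.log 2) ≤ (Real.log 2)⁻¹ - 1 := h1
    have h2 : 1 - (Real.log 2)⁻¹ ≤ Real.log (Real.log 2) := by linarith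
    rw [one_div]
    linarith
  have hinv : 1 / Real.log 2 ≤ 1.45 := by
    rw [div_le_iff₀ (by linarith : (0:ℝ) < Real.log 2)]
    nlinarith
  have hlb2 : Real.log (Real.log 2) ≥ -0.45 := by linarith
  calc Real.log s / 2 = Real.log s - Real.log s / 2 := by ring
    _ ≤ Real.log s - 1 := by linarith
    _ ≤ Real.log s + Real.log (Real.log 2) := by linarith
    _ = Real.log ((s:ℝ) * Real.log 2) := hsplit.symm
    _ ≤ Real.log (Real.log n) := hll

lemma lam_le_sqrt {s n : ℕ} (hs : 8 ≤ s) (hn1 : 2^s ≤ n) :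
    lam s ≤ Real.sqrt 2 * Real.sqrt ((n:ℝ) * Real.log (Real.log n)) := by
  have hll := loglog_lb hs hn1
  have hlogs2 : 1 ≤ Real.log s := log_nat_ge_one (by omega)
  have hn0 : (0:ℝ) < n := by
    have h0 : 0 < 2^s := Nat.pow_pos (by norm_num)
    have : 0 < n := by omega
    exact_mod_cast this
  have hcast : ((2:ℝ)^s) ≤ (n:ℝ) := by
    have : ((2^s : ℕ) : ℝ) ≤ (n:ℝ) := by exact_mod_cast hn1
    rwa [show ((2^s : ℕ) : ℝ) = (2:ℝ)^s by push_cast; ring] at this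
  rw [lam, ← Real.sqrt_mul (by norm_num : (0:ℝ) ≤ 2)]
  apply Real.sqrt_le_sqrt
  have h1 : (2:ℝ)^s * Real.log s ≤ (n:ℝ) * Real.log s := by
    apply mul_le_mul_of_nonneg_right hcast (by linarith)
  have h2 : (n:ℝ) * Real.log s ≤ (n:ℝ) * (2 * Real.log (Real.log n)) := by
    apply mul_le_mul_of_nonneg_left _ hn0.le
    linarith
  linarith

lemma sqrt_nll_pos {s n : ℕ} (hs : 8 ≤ s) (hn1 : 2^s ≤ n) :
    0 < Real.sqrt ((n:ℝ) * Real.log (Real.log n)) := by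
  have hll := loglog_lb hs hn1
  have hlogs2 : 1 ≤ Real.log s := log_nat_ge_one (by omega)
  have hn0 : (0:ℝ) < n := by
    have h0 : 0 < 2^s := Nat.pow_pos (by norm_num)
    have : 0 < n := by omega
    exact_mod_cast this
  apply Real.sqrt_pos.mpr
  have : 0 < Real.log (Real.log n) := by linarith
  positivity

end Stmt2Aux

open Stmt2Aux in
/-- **Theorem 2.4 (ii), key conclusion**: if `1 < p < 2 < r`, `p = r/(r-1)`, `g ∈ 𝕃^p` and
`g - g∘T ∈ 𝕃^r`, then `(n log log n)^{-1/2} g ∘ T^n → 0` almost surely. -/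
theorem stmt2 {Ω : Type*} [MeasurableSpace Ω] (μ : Measure Ω) [IsProbabilityMeasure μ]
    (T : Ω ≃ᵐ Ω) (hT : MeasurePreserving (⇑T) μ μ)
    (p r : ℝ) (hp1 : 1 < p) (hp2 : p < 2) (hr : 2 < r) (hpr : p = r / (r - 1))
    (g : Ω → ℝ) (hg : Measurable g)
    (hgLp : MemLp g (ENNReal.ofReal p) μ)
    (hcobLr : MemLp (fun ω => g ω - g (T ω)) (ENNReal.ofReal r) μ) :
    ∀ᵐ ω ∂μ, Tendsto
      (fun n : ℕ => g ((⇑T)^[n] ω) / Real.sqrt (n * Real.log (Real.log n)))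
      atTop (𝓝 0) := by
  have hae : ∀ᵐ ω ∂μ, ∀ k : ℕ, ∀ᶠ s : ℕ in atTop, ∀ n : ℕ, 2^s ≤ n → n < 2^(s+1) →
      |g ((⇑T)^[n] ω)| ≤ ((k:ℝ)+1)⁻¹ * lam s := by
    rw [ae_all_iff]
    intro k
    exact key μ T hT p r hp1 hp2 hr hpr g hg hgLp hcobLr ((k:ℝ)+1)⁻¹ (by positivity)
  filter_upwards [hae] with ω hω
  rw [Metric.tendsto_atTop]
  intro ε hε
  obtain ⟨k, hk⟩ := exists_nat_gt (2/ε)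
  have hk2 : 2 / ((k:ℝ)+1) < ε := by
    rw [div_lt_iff₀ (by positivity)]
    have h1 : 2/ε < (k:ℝ) := hk
    have h2 : 2 < ε * (k:ℝ) := by
      rw [div_lt_iff₀ hε] at h1
      linarith
    nlinarith
  obtain ⟨s0, hs0⟩ := eventually_atTop.mp (hω k)
  refine ⟨2^(max s0 8), fun n hn => ?_⟩
  have hn0 : n ≠ 0 := by
    have : 0 < 2^(max s0 8) := Nat.pow_pos (by norm_num)
    omega
  set s := Nat.log 2 n with hsdef
  have hsl : 2^s ≤ n := Nat.pow_log_le_self 2 hn0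
  have hsu : n < 2^(s+1) := Nat.lt_pow_succ_log_self (by norm_num) n
  have hss : max s0 8 ≤ s := (Nat.le_log_iff_pow_le (by norm_num) hn0).mpr hn
  have hs8 : 8 ≤ s := le_trans (le_max_right _ _) hss
  have hbound := hs0 s (le_trans (le_max_left _ _) hss) n hsl hsu
  have hD := sqrt_nll_pos hs8 hsl
  have hcmp := lam_le_sqrt hs8 hsl
  rw [Real.dist_eq, sub_zero, abs_div,
    abs_of_nonneg (Real.sqrt_nonneg ((n:ℝ) * Real.log (Real.log n)))]
  rw [div_lt_iff₀ hD]
  have hQ2 : Real.sqrt 2 < 2 := by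
    have := Real.sq_sqrt (by norm_num : (0:ℝ) ≤ 2)
    nlinarith [Real.sqrt_nonneg 2]
  calc |g ((⇑T)^[n] ω)| ≤ ((k:ℝ)+1)⁻¹ * lam s := hbound
    _ ≤ ((k:ℝ)+1)⁻¹ * (Real.sqrt 2 * Real.sqrt ((n:ℝ) * Real.log (Real.log n))) := by
        apply mul_le_mul_of_nonneg_left hcmp (by positivity)
    _ < ε * Real.sqrt ((n:ℝ) * Real.log (Real.log n)) := by
        have h3 : ((k:ℝ)+1)⁻¹ * Real.sqrt 2 < ε := by
          have h4 : ((k:ℝ)+1)⁻¹ * Real.sqrt 2 < ((k:ℝ)+1)⁻¹ * 2 := by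
            apply mul_lt_mul_of_pos_left hQ2 (by positivity)
          have h5 : ((k:ℝ)+1)⁻¹ * 2 = 2 / ((k:ℝ)+1) := by ring
          linarith
        calc ((k:ℝ)+1)⁻¹ * (Real.sqrt 2 * Real.sqrt ((n:ℝ) * Real.log (Real.log n)))
            = (((k:ℝ)+1)⁻¹ * Real.sqrt 2) * Real.sqrt ((n:ℝ) * Real.log (Real.log n)) := by
              ring
          _ < ε * Real.sqrt ((n:ℝ) * Real.log (Real.log n)) := by
              apply mul_lt_mul_of_pos_right h3 hD
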